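/- The homomorphism κ : F₃ → D(ℤ²) defined by κ(α₁) = ((0,0), 1̄), κ(α₂) = ((1,0), 1̄), κ(α₃) = ((0,−1), 1̄) (where 1̄ is the nontrivial element of ℤ/2) is surjective, and its kernel is invariant under the Artin automorphisms: σ₁(ker κ) = ker κ and σ₂(ker κ) = ker κ. -/

import Mathlib

/-- The action of `ℤ/2` on an abelian group `Q` in which the nontrivial element acts by
inversion. -/
def dihedralAct (Q : Type*) [CommGroup Q] : Multiplicative (ZMod 2) →* MulAut Q where
  toFun x := MulEquiv.inv Q ^ (Multiplicative.toAdd x).val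
  map_one' := by simp
  map_mul' x y := by
    have h2 : (MulEquiv.inv Q) ^ 2 = 1 := by
      ext a
      simp [pow_succ]
    show MulEquiv.inv Q ^ (Multiplicative.toAdd (x * y)).val = _
    rw [toAdd_mul, ZMod.val_add, ← pow_eq_pow_mod _ h2, pow_add]

/-- The generalized dihedral group `D(Q) = Q ⋊ ℤ/2`, the generator of `ℤ/2` acting on the
abelian group `Q` by inversion. -/
abbrev GenDihedral (Q : Type*) [CommGroup Q] :=
  Q ⋊[dihedralAct Q] Multiplicative (ZMod 2)

/-- The homomorphism `κ : F₃ → D(ℤ²)`, `α₀ ↦ ((0,0), 1̄)`, `α₁ ↦ ((1,0), 1̄)`,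
`α₂ ↦ ((0,−1), 1̄)`. -/
def kappaHom : FreeGroup (Fin 3) →* GenDihedral (Multiplicative (ℤ × ℤ)) :=
  FreeGroup.lift fun i =>
    ⟨Multiplicative.ofAdd (![((0 : ℤ), (0 : ℤ)), (1, 0), (0, -1)] i),
      Multiplicative.ofAdd (1 : ZMod 2)⟩

/-- The Artin automorphism `σ₁` of the free group on `α₀, α₁, α₂`:
`α₀ ↦ α₀α₁α₀⁻¹`, `α₁ ↦ α₀`, `α₂ ↦ α₂`. -/
def artinSigma1 : FreeGroup (Fin 3) →* FreeGroup (Fin 3) :=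
  FreeGroup.lift fun i =>
    if i = 0 then FreeGroup.of 0 * FreeGroup.of 1 * (FreeGroup.of 0)⁻¹
    else if i = 1 then FreeGroup.of 0
    else FreeGroup.of 2

/-- The Artin automorphism `σ₂` of the free group on `α₀, α₁, α₂`:
`α₀ ↦ α₀`, `α₁ ↦ α₁α₂α₁⁻¹`, `α₂ ↦ α₁`. -/
def artinSigma2 : FreeGroup (Fin 3) →* FreeGroup (Fin 3) :=
  FreeGroup.lift fun i =>
    if i = 0 then FreeGroup.of 0
    else if i = 1 then FreeGroup.of 1 * FreeGroup.of 2 * (FreeGroup.of 1)⁻¹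
    else FreeGroup.of 1

lemma zmod2_cases (x : Multiplicative (ZMod 2)) :
    x = 1 ∨ x = Multiplicative.ofAdd (1 : ZMod 2) := by
  revert x; decide

@[simp] lemma dihedralAct_one' {Q : Type*} [CommGroup Q] (q : Q) : dihedralAct Q 1 q = q := by
  simp

@[simp] lemma dihedralAct_s {Q : Type*} [CommGroup Q] (q : Q) :
    dihedralAct Q (Multiplicative.ofAdd 1) q = q⁻¹ := by
  show (MulEquiv.inv Q ^ (1 : ZMod 2).val) q = q⁻¹
  have : (1 : ZMod 2).val = 1 := rfl
  rw [this]; rfl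

@[simp] lemma zmod2_val_one : (1 : ZMod 2).val = 1 := rfl
@[simp] lemma ofAdd_two_zmod : Multiplicative.ofAdd (2 : ZMod 2) = 1 := rfl

lemma dihedralAct_invol {Q : Type*} [CommGroup Q] (x : Multiplicative (ZMod 2)) (q : Q) :
    dihedralAct Q x (dihedralAct Q x q) = q := by
  rcases zmod2_cases x with h | h <;> subst h <;> simp

@[simp] lemma dihedralAct_inv {Q : Type*} [CommGroup Q] (x : Multiplicative (ZMod 2)) (q : Q) :
    (dihedralAct Q x)⁻¹ q = dihedralAct Q x q := by
  calc (dihedralAct Q x)⁻¹ q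
      = (dihedralAct Q x)⁻¹ (dihedralAct Q x (dihedralAct Q x q)) := by rw [dihedralAct_invol]
    _ = dihedralAct Q x q := (dihedralAct Q x).symm_apply_apply _

lemma eps_one : (Multiplicative.toAdd (1 : Multiplicative (ZMod 2))).val = 0 := rfl
lemma eps_ss : ((1 + 1 : ZMod 2)).val = 0 := rfl
lemma eps_s : (Multiplicative.toAdd (Multiplicative.ofAdd (1 : ZMod 2))).val = 1 := rfl

/-- hom of generalized dihedral groups from a hom `A` and a twist `c`. -/
def Dmap {Q : Type*} [CommGroup Q] (A : Q →* Q) (c : Q) : GenDihedral Q →* GenDihedral Q where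
  toFun g := ⟨A g.left * c ^ (Multiplicative.toAdd g.right).val, g.right⟩
  map_one' := by
    ext <;> simp [SemidirectProduct.one_left, SemidirectProduct.one_right, eps_one]
  map_mul' g h := by
    ext
    · show A ((g * h).left) * c ^ _ = _
      rw [SemidirectProduct.mul_left]
      show _ = (A g.left * c ^ _) * dihedralAct Q g.right (A h.left * c ^ _)
      rcases zmod2_cases g.right with h1 | h1 <;> rcases zmod2_cases h.right with h2 | h2 <;>
        simp [h1, h2, eps_one, eps_s, dihedralAct_one', dihedralAct_s, mul_comm, mul_left_comm,
          mul_assoc, ← ofAdd_add, eps_ss]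
    · show (g * h).right = g.right * h.right
      rfl

@[simp] lemma Dmap_apply {Q : Type*} [CommGroup Q] (A : Q →* Q) (c : Q) (g : GenDihedral Q) :
    Dmap A c g = ⟨A g.left * c ^ (Multiplicative.toAdd g.right).val, g.right⟩ := rfl

/-- A multiplicative hom of `ℤ²` given by an integer matrix. -/
def matHom (a b c d : ℤ) : Multiplicative (ℤ × ℤ) →* Multiplicative (ℤ × ℤ) :=
  AddMonoidHom.toMultiplicative <| AddMonoidHom.mk'
    (fun p => (a * p.1 + b * p.2, c * p.1 + d * p.2))
    (by intro p q; simp [Prod.ext_iff]; constructor <;> ring)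

@[simp] lemma matHom_apply (a b c d : ℤ) (p : ℤ × ℤ) :
    matHom a b c d (Multiplicative.ofAdd p)
      = Multiplicative.ofAdd (a * p.1 + b * p.2, c * p.1 + d * p.2) := rfl

def tau1 : FreeGroup (Fin 3) →* FreeGroup (Fin 3) :=
  FreeGroup.lift fun i =>
    if i = 0 then FreeGroup.of 1
    else if i = 1 then (FreeGroup.of 1)⁻¹ * FreeGroup.of 0 * FreeGroup.of 1
    else FreeGroup.of 2

def tau2 : FreeGroup (Fin 3) →* FreeGroup (Fin 3) :=
  FreeGroup.lift fun i =>
    if i = 0 then FreeGroup.of 0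
    else if i = 1 then FreeGroup.of 2
    else (FreeGroup.of 2)⁻¹ * FreeGroup.of 1 * FreeGroup.of 2

lemma sigma1_tau1 : artinSigma1.comp tau1 = MonoidHom.id _ := by
  apply FreeGroup.ext_hom
  intro i
  fin_cases i <;>
    simp [artinSigma1, tau1, FreeGroup.lift_apply_of] <;> group

lemma sigma2_tau2 : artinSigma2.comp tau2 = MonoidHom.id _ := by
  apply FreeGroup.ext_hom
  intro i
  fin_cases i <;>
    simp [artinSigma2, tau2, FreeGroup.lift_apply_of] <;> group

lemma kappa_sigma1 : kappaHom.comp artinSigma1 = (Dmap (matHom 1 (-1) 0 1)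
    (Multiplicative.ofAdd ((-1 : ℤ), (0 : ℤ)))).comp kappaHom := by
  apply FreeGroup.ext_hom
  intro i
  fin_cases i <;>
    · ext <;>
        (try simp [artinSigma1, kappaHom, FreeGroup.lift_apply_of, eps_s, ← ofAdd_add, ← ofAdd_neg,
          Prod.ext_iff]) <;> (try decide) <;> norm_num

lemma kappa_tau1 : kappaHom.comp tau1 = (Dmap (matHom 1 1 0 1)
    (Multiplicative.ofAdd ((1 : ℤ), (0 : ℤ)))).comp kappaHom := by
  apply FreeGroup.ext_hom
  intro i
  fin_cases i <;>
    · ext <;>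
        (try simp [tau1, kappaHom, FreeGroup.lift_apply_of, eps_s, ← ofAdd_add, ← ofAdd_neg,
          Prod.ext_iff]) <;> (try decide) <;> norm_num

lemma kappa_sigma2 : kappaHom.comp artinSigma2 = (Dmap (matHom 2 (-1) 1 0)
    (1 : Multiplicative (ℤ × ℤ))).comp kappaHom := by
  apply FreeGroup.ext_hom
  intro i
  fin_cases i <;>
    · ext <;>
        (try simp [artinSigma2, kappaHom, FreeGroup.lift_apply_of, eps_s, ← ofAdd_add, ← ofAdd_neg,
          Prod.ext_iff]) <;> (try decide) <;> norm_num

lemma kappa_tau2 : kappaHom.comp tau2 = (Dmap (matHom 0 1 (-1) 2)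
    (1 : Multiplicative (ℤ × ℤ))).comp kappaHom := by
  apply FreeGroup.ext_hom
  intro i
  fin_cases i <;>
    · ext <;>
        (try simp [tau2, kappaHom, FreeGroup.lift_apply_of, eps_s, ← ofAdd_add, ← ofAdd_neg,
          Prod.ext_iff]) <;> (try decide) <;> norm_num

lemma ker_map_eq (σ τ : FreeGroup (Fin 3) →* FreeGroup (Fin 3))
    (hst : σ.comp τ = MonoidHom.id _)
    (φ ψ : GenDihedral (Multiplicative (ℤ × ℤ)) →* GenDihedral (Multiplicative (ℤ × ℤ)))
    (h1 : kappaHom.comp σ = φ.comp kappaHom) (h2 : kappaHom.comp τ = ψ.comp kappaHom) :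
    Subgroup.map σ kappaHom.ker = kappaHom.ker := by
  apply le_antisymm
  · rintro _ ⟨x, hx, rfl⟩
    have h1x : kappaHom (σ x) = φ (kappaHom x) := DFunLike.congr_fun h1 x
    have hx' : kappaHom x = 1 := hx
    show kappaHom (σ x) = 1
    rw [h1x, hx', map_one]
  · intro x hx
    have hx' : kappaHom x = 1 := hx
    refine ⟨τ x, ?_, ?_⟩
    · have h2x : kappaHom (τ x) = ψ (kappaHom x) := DFunLike.congr_fun h2 x
      show kappaHom (τ x) = 1
      rw [h2x, hx', map_one]
    · have := DFunLike.congr_fun hst x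
      simpa using this

lemma kappa_of (i : Fin 3) : kappaHom (FreeGroup.of i) =
    ⟨Multiplicative.ofAdd (![((0 : ℤ), (0 : ℤ)), (1, 0), (0, -1)] i),
      Multiplicative.ofAdd (1 : ZMod 2)⟩ := FreeGroup.lift_apply_of

lemma kappa_surj : Function.Surjective ⇑kappaHom := by
  intro g
  obtain ⟨a, x⟩ := g
  have key : ∀ m n : ℤ, kappaHom ((FreeGroup.of 1 * FreeGroup.of 0) ^ m *
      (FreeGroup.of 0 * FreeGroup.of 2) ^ n) =
      SemidirectProduct.inl (Multiplicative.ofAdd ((m : ℤ), (n : ℤ))) := by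
    intro m n
    have e1 : kappaHom (FreeGroup.of 1 * FreeGroup.of 0) =
        SemidirectProduct.inl (Multiplicative.ofAdd ((1 : ℤ), (0 : ℤ))) := by
      ext <;> simp [kappa_of, ← ofAdd_add, Prod.ext_iff] <;> decide
    have e2 : kappaHom (FreeGroup.of 0 * FreeGroup.of 2) =
        SemidirectProduct.inl (Multiplicative.ofAdd ((0 : ℤ), (1 : ℤ))) := by
      ext <;> simp [kappa_of, ← ofAdd_add, Prod.ext_iff] <;> decide
    have inl_zpow : ∀ (q : Multiplicative (ℤ × ℤ)) (k : ℤ),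
        (SemidirectProduct.inl (φ := dihedralAct (Multiplicative (ℤ × ℤ))) q) ^ k =
          SemidirectProduct.inl (q ^ k) := fun q k => (map_zpow SemidirectProduct.inl q k).symm
    rw [map_mul, map_zpow, map_zpow, e1, e2, inl_zpow, inl_zpow, ← map_mul]
    congr 1
    rw [← ofAdd_zsmul, ← ofAdd_zsmul, ← ofAdd_add]
    congr 1
    simp [Prod.ext_iff]
  rcases zmod2_cases x with hx | hx
  · refine ⟨(FreeGroup.of 1 * FreeGroup.of 0) ^ (Multiplicative.toAdd a).1 *
      (FreeGroup.of 0 * FreeGroup.of 2) ^ (Multiplicative.toAdd a).2, ?_⟩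
    rw [key]
    ext <;> simp [hx]
  · refine ⟨(FreeGroup.of 1 * FreeGroup.of 0) ^ (Multiplicative.toAdd a).1 *
      (FreeGroup.of 0 * FreeGroup.of 2) ^ (Multiplicative.toAdd a).2 * FreeGroup.of 0, ?_⟩
    rw [map_mul, key, kappa_of]
    ext <;> simp [hx]

/-- The homomorphism `κ : F₃ → D(ℤ²)` defined by `κ(α₀) = ((0,0), 1̄)`,
`κ(α₁) = ((1,0), 1̄)`, `κ(α₂) = ((0,−1), 1̄)` is surjective, and its kernel is invariant
under the Artin automorphisms: `σ₁(ker κ) = ker κ` and `σ₂(ker κ) = ker κ`. -/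
theorem kappa_surjective_and_ker_invariant :
    Function.Surjective ⇑kappaHom ∧
      Subgroup.map artinSigma1 kappaHom.ker = kappaHom.ker ∧
      Subgroup.map artinSigma2 kappaHom.ker = kappaHom.ker := by
  exact ⟨kappa_surj,
    ker_map_eq _ _ sigma1_tau1 _ _ kappa_sigma1 kappa_tau1,
    ker_map_eq _ _ sigma2_tau2 _ _ kappa_sigma2 kappa_tau2⟩
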